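/- arXiv:1109.5877 — 3 statements merged into one kernel-verified Lean document; each statement's English description precedes it below -/
import Mathlib

section
/- Differential equation for the graded determinant (Lemma): Take K = ℝ and assume A is finite-dimensional over ℝ, equipped with a norm making it a normed ℝ-algebra. Assume all values of w : Fin N → Γ are even, and let D : M⁰(w) → 𝒜 0 satisfy the graded-determinant axioms and be ℝ-linear in each row (additive in each row, and replacing a row by a real scalar multiple multiplies the value by that scalar). Let X, M : ℝ → Matrix (Fin N) (Fin N) A be such that X t ∈ M⁰(w) and M t ∈ M⁰(w) for all t, and such that for all t, α, β the entry function s ↦ X s α β has at t the derivative ((M t) * (X t)) α β. Then for every t the function s ↦ (D (X s) : A) has at t the derivative (∑ α, M t α α) * D (X t); note that for purely even degree-zero matrices the graded trace coincides with the ordinary trace ∑ α, M t α α. -/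
open Matrix

abbrev Gamma (n : ℕ) := Fin n → ZMod 2

def gpair {n : ℕ} (γ δ : Gamma n) : ZMod 2 := ∑ i, γ i * δ i

def gsign {n : ℕ} (γ δ : Gamma n) : ℤ := if gpair γ δ = 1 then -1 else 1

def GammaEven {n : ℕ} (γ : Gamma n) : Prop := gpair γ γ = 0

instance {n : ℕ} : DecidablePred (GammaEven (n := n)) := fun γ =>
  inferInstanceAs (Decidable (gpair γ γ = 0))

/-- `Γ`-graded commutativity of the graded algebra `A`:
`b * a = sign(γ,δ) • (a * b)` for homogeneous `a, b`. -/
def GradedComm {n : ℕ} {K A : Type*} [Field K] [Ring A] [Algebra K A]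
    (𝒜 : Gamma n → Submodule K A) : Prop :=
  ∀ (γ δ : Gamma n) (a b : A), a ∈ 𝒜 γ → b ∈ 𝒜 δ → b * a = gsign γ δ • (a * b)

/-- `X ∈ M^x(w)` : the matrix `X` is homogeneous of degree `x` w.r.t. the weight map `w`. -/
def Mdeg {n : ℕ} {K A : Type*} [Field K] [Ring A] [Algebra K A]
    (𝒜 : Gamma n → Submodule K A) {ι : Type*} (w : ι → Gamma n) (x : Gamma n)
    (X : Matrix ι ι A) : Prop :=
  ∀ α β, X α β ∈ 𝒜 (w α + w β + x)

/-- `X ∈ M⁰(w)` : the matrix `X` is homogeneous of degree `0` w.r.t. the weight map `w`. -/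
def Mdeg0 {n : ℕ} {K A : Type*} [Field K] [Ring A] [Algebra K A]
    (𝒜 : Gamma n → Submodule K A) {ι : Type*} (w : ι → Gamma n)
    (X : Matrix ι ι A) : Prop :=
  ∀ α β, X α β ∈ 𝒜 (w α + w β)

/-- Leibniz determinant over a (not necessarily commutative) ring, with the product
taken in the order given by the linear order on the index type. -/
def listDet {ι : Type*} [Fintype ι] [LinearOrder ι] {A : Type*} [Ring A]
    (X : Matrix ι ι A) : A :=
  ∑ σ : Equiv.Perm ι, (Equiv.Perm.sign σ : ℤ) •
    ((Finset.sort Finset.univ (· ≤ ·)).map fun i => X (σ i) i).prod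

/-- The product over the values `γ` in the range of `v` (ordered by `lo`) of the ordinary
determinants of the diagonal blocks `{α | v α = γ}` of `X`. -/
def detProd {n : ℕ} (lo : LinearOrder (Gamma n)) {ι : Type*} [Fintype ι] [LinearOrder ι]
    {A : Type*} [Ring A] (v : ι → Gamma n) (X : Matrix ι ι A) : A :=
  letI : LinearOrder (Gamma n) := lo
  ((Finset.sort (Finset.image v Finset.univ) (· ≤ ·)).map fun γ =>
    listDet (Matrix.of fun a b : {α : ι // v α = γ} => X a.1 b.1)).prod

/-- The graded-determinant axioms for a map `D` on degree-zero graded matrices with weight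
map `v` and a fixed linear order `lo` on `Γ`: `D` is valued in `𝒜 0`, is multiplicative,
equals the product of the ordinary block determinants on block-diagonal matrices, and
equals `1` on block-unitriangular matrices. -/
def DetAxioms {n : ℕ} {K A : Type*} [Field K] [Ring A] [Algebra K A]
    (𝒜 : Gamma n → Submodule K A) (lo : LinearOrder (Gamma n))
    {ι : Type*} [Fintype ι] [LinearOrder ι] (v : ι → Gamma n)
    (D : Matrix ι ι A → A) : Prop :=
  (∀ X, Mdeg0 𝒜 v X → D X ∈ 𝒜 0) ∧
  (∀ X Y, Mdeg0 𝒜 v X → Mdeg0 𝒜 v Y → D (X * Y) = D X * D Y) ∧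
  (∀ X, Mdeg0 𝒜 v X → (∀ α β, v α ≠ v β → X α β = 0) → D X = detProd lo v X) ∧
  (∀ X, Mdeg0 𝒜 v X → (∀ α β, v α = v β → X α β = if α = β then (1 : A) else 0) →
    ((∀ α β, lo.lt (v α) (v β) → X α β = 0) ∨ (∀ α β, lo.lt (v β) (v α) → X α β = 0)) →
    D X = 1)

/-- `D` is ℝ-linear in each row of matrices satisfying `P`: additive in each row, and
replacing a row by a real scalar multiple multiplies the value by that scalar. -/
def RowLinear {ι : Type*} {A : Type*} [Ring A] [Module ℝ A]
    (P : Matrix ι ι A → Prop) (D : Matrix ι ι A → A) : Prop :=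
  (∀ (X X' X'' : Matrix ι ι A) (α₀ : ι), P X → P X' → P X'' →
    (∀ α β, α ≠ α₀ → X α β = X' α β ∧ X α β = X'' α β) →
    (∀ β, X α₀ β = X' α₀ β + X'' α₀ β) →
    D X = D X' + D X'') ∧
  (∀ (c : ℝ) (X X' : Matrix ι ι A) (α₀ : ι), P X → P X' →
    (∀ α β, α ≠ α₀ → X' α β = X α β) →
    (∀ β, X' α₀ β = c • X α₀ β) →
    D X' = c • D X)

/-! ### Auxiliary material for the proof -/

section Aux

theorem MultilinearMap.continuous_findim {m : ℕ} {E F : Type*} [NormedAddCommGroup E]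
    [NormedSpace ℝ E] [FiniteDimensional ℝ E] [NormedAddCommGroup F] [NormedSpace ℝ F]
    (f : MultilinearMap ℝ (fun _ : Fin m => E) F) : Continuous f := by
  classical
  set b := Module.finBasis ℝ E with hb
  have key : ∀ v : Fin m → E,
      f v = ∑ r : Fin m → Fin (Module.finrank ℝ E),
        (∏ i, b.repr (v i) (r i)) • f (fun i => b (r i)) := by
    intro v
    have h1 : v = fun i => ∑ j, b.repr (v i) j • b j :=
      funext fun i => (b.sum_repr (v i)).symm
    conv_lhs => rw [h1]
    rw [f.map_sum]
    refine Finset.sum_congr rfl fun r _ => ?_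
    exact f.map_smul_univ _ _
  have : Continuous fun v : Fin m → E => ∑ r : Fin m → Fin (Module.finrank ℝ E),
      (∏ i, b.repr (v i) (r i)) • f (fun i => b (r i)) := by
    refine continuous_finset_sum _ fun r _ => Continuous.smul ?_ continuous_const
    refine continuous_finset_prod _ fun i _ => ?_
    have h2 : Continuous fun x : E => b.repr x (r i) :=
      (Module.Basis.coord b (r i)).continuous_of_finiteDimensional
    exact h2.comp (continuous_apply i)
  simpa [← funext key] using this

theorem MultilinearMap.hasDerivAt_comp {m : ℕ} {E F : Type*} [NormedAddCommGroup E]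
    [NormedSpace ℝ E] [FiniteDimensional ℝ E] [NormedAddCommGroup F] [NormedSpace ℝ F]
    (f : MultilinearMap ℝ (fun _ : Fin m => E) F)
    (c : ℝ → Fin m → E) (c' : Fin m → E) (t : ℝ)
    (hc : ∀ i, HasDerivAt (fun s => c s i) (c' i) t) :
    HasDerivAt (fun s => f (c s))
      (∑ i, f (Function.update (c t) i (c' i))) t := by
  classical
  let F' : ContinuousMultilinearMap ℝ (fun _ : Fin m => E) F :=
    { toMultilinearMap := f, cont := f.continuous_findim }
  have hF : HasFDerivAt F' (F'.linearDeriv (c t)) (c t) := F'.hasFDerivAt (c t)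
  have hc' : HasDerivAt c c' t := hasDerivAt_pi.2 hc
  have := hF.comp_hasDerivAt t hc'
  simp [ContinuousMultilinearMap.linearDeriv_apply] at this
  exact this

/-- Product of a mapped list where all entries are `1` except the one at `i0`. -/
theorem prodMapEqSingle {σ M : Type*} [Monoid M] :
    ∀ (l : List σ) (f : σ → M) (i0 : σ), l.Nodup → i0 ∈ l →
      (∀ x ∈ l, x ≠ i0 → f x = 1) → (l.map f).prod = f i0 := by
  intro l
  induction l with
  | nil => intro f i0 _ hi; simp at hi
  | cons a L ih =>
    intro f i0 hnd hi h1
    rw [List.nodup_cons] at hnd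
    rw [List.map_cons, List.prod_cons]
    rcases List.mem_cons.mp hi with rfl | hiL
    · have : (L.map f).prod = 1 := by
        refine List.prod_eq_one fun x hx => ?_
        rw [List.mem_map] at hx
        obtain ⟨y, hy, rfl⟩ := hx
        exact h1 y (List.mem_cons_of_mem _ hy) (fun h => hnd.1 (h ▸ hy))
      rw [this, mul_one]
    · have ha : f a = 1 :=
        h1 a List.mem_cons_self (fun h => hnd.1 (h ▸ hiL))
      rw [ha, one_mul]
      exact ih f i0 hnd.2 hiL fun x hx => h1 x (List.mem_cons_of_mem _ hx)

section ListDetLemmas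
variable {ι : Type*} [Fintype ι] [LinearOrder ι] {A : Type*} [Ring A]

theorem listDet_eq_diag (X : Matrix ι ι A)
    (h : ∀ σ : Equiv.Perm ι, σ ≠ 1 → ∃ a, X (σ a) a = 0) :
    listDet X = ((Finset.sort (Finset.univ : Finset ι) (· ≤ ·)).map fun i => X i i).prod := by
  rw [listDet, Finset.sum_eq_single (1 : Equiv.Perm ι)]
  · simp
  · intro σ _ hσ
    obtain ⟨a, ha⟩ := h σ hσ
    have hmem : (0 : A) ∈ (Finset.sort (Finset.univ : Finset ι) (· ≤ ·)).map
        fun i => X (σ i) i := by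
      rw [List.mem_map]
      exact ⟨a, by simp [Finset.mem_sort], ha⟩
    rw [List.prod_eq_zero hmem, smul_zero]
  · simp

/-- `listDet` of a diagonal matrix is the ordered product of its diagonal entries. -/
theorem listDet_of_diag (X : Matrix ι ι A) (h : ∀ a b, a ≠ b → X a b = 0) :
    listDet X = ((Finset.sort (Finset.univ : Finset ι) (· ≤ ·)).map fun i => X i i).prod := by
  refine listDet_eq_diag X fun σ hσ => ?_
  obtain ⟨a, ha⟩ : ∃ a, σ a ≠ a := by
    by_contra hc
    push_neg at hc
    exact hσ (Equiv.ext fun a => by simp [hc a])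
  exact ⟨a, h _ _ ha⟩

/-- `listDet` of a matrix which is `1` on the diagonal and `0` off the diagonal except
possibly at a single off-diagonal position `(i0, j0)` equals `1`. -/
theorem listDet_unitriangular (X : Matrix ι ι A) (i0 j0 : ι) (hne : i0 ≠ j0)
    (hdiag : ∀ a, X a a = 1)
    (h : ∀ a b, a ≠ b → (a, b) ≠ (i0, j0) → X a b = 0) :
    listDet X = 1 := by
  have := listDet_eq_diag X (fun σ hσ => ?_)
  · rw [this, List.prod_eq_one]
    intro x hx
    rw [List.mem_map] at hx
    obtain ⟨a, _, rfl⟩ := hx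
    exact hdiag a
  · obtain ⟨a, ha⟩ : ∃ a, σ a ≠ a := by
      by_contra hc
      push_neg at hc
      exact hσ (Equiv.ext fun a => by simp [hc a])
    by_cases hcase : (σ a, a) = (i0, j0)
    · obtain ⟨h1, h2⟩ := Prod.mk.injEq .. ▸ hcase
      subst h2
      have e : σ (σ⁻¹ a) = a := σ.apply_symm_apply a
      refine ⟨σ⁻¹ a, h _ _ ?_ ?_⟩
      · rw [e]
        intro hq
        exact ha (by nth_rewrite 1 [hq]; rw [e])
      · rw [e]
        intro hp
        have : a = i0 := (Prod.mk.injEq ..).mp hp |>.1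
        rw [← h1] at this
        exact ha this.symm
    · exact ⟨a, h _ _ ha hcase⟩

end ListDetLemmas

section DetProdLemmas
variable {n : ℕ} (lo : LinearOrder (Gamma n)) {ι : Type*} [Fintype ι] [LinearOrder ι]
  {A : Type*} [Ring A]

/-- `detProd` of a diagonal matrix whose diagonal entries are all `1` except possibly
at `i0`. -/
theorem detProd_of_diag (v : ι → Gamma n) (X : Matrix ι ι A)
    (hoff : ∀ a b, a ≠ b → X a b = 0) (i0 : ι) (h1 : ∀ a, a ≠ i0 → X a a = 1) :
    detProd lo v X = X i0 i0 := by
  letI : LinearOrder (Gamma n) := lo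
  rw [detProd]
  rw [prodMapEqSingle _ _ (v i0) (Finset.sort_nodup _ _)
    ((Finset.mem_sort _).2 (Finset.mem_image.2 ⟨i0, Finset.mem_univ _, rfl⟩)) ?_]
  · rw [listDet_of_diag (Matrix.of fun a b : {α : ι // v α = v i0} => X a.1 b.1)
      (fun a b hab => hoff a.1 b.1 (fun h => hab (Subtype.ext h)))]
    rw [prodMapEqSingle _ _ (⟨i0, rfl⟩ : {α : ι // v α = v i0}) (Finset.sort_nodup _ _)
      ((Finset.mem_sort _).2 (Finset.mem_univ _)) ?_]
    · rfl
    · intro x _ hx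
      exact h1 x.1 (fun h => hx (Subtype.ext h))
  · intro γ _ hγ
    rw [listDet_of_diag (Matrix.of fun a b : {α : ι // v α = γ} => X a.1 b.1)
      (fun a b hab => hoff a.1 b.1 (fun h => hab (Subtype.ext h)))]
    refine List.prod_eq_one fun x hx => ?_
    rw [List.mem_map] at hx
    obtain ⟨a, _, rfl⟩ := hx
    exact h1 a.1 (fun h => hγ (by rw [← a.2, h]))

/-- `detProd` of a matrix which is `1` on the diagonal and `0` off the diagonal except
possibly at a single off-diagonal position `(i0, j0)` in a single block equals `1`. -/
theorem detProd_unitriangular (v : ι → Gamma n) (X : Matrix ι ι A) (i0 j0 : ι)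
    (hne : i0 ≠ j0) (hv : v i0 = v j0) (hdiag : ∀ a, X a a = 1)
    (hoff : ∀ a b, a ≠ b → (a, b) ≠ (i0, j0) → X a b = 0) :
    detProd lo v X = 1 := by
  letI : LinearOrder (Gamma n) := lo
  rw [detProd]
  refine List.prod_eq_one fun x hx => ?_
  rw [List.mem_map] at hx
  obtain ⟨γ, _, rfl⟩ := hx
  by_cases hγ : γ = v i0
  · subst hγ
    refine listDet_unitriangular _ (⟨i0, rfl⟩ : {α : ι // v α = v i0}) ⟨j0, hv.symm⟩
      (fun h => hne (congrArg Subtype.val h)) (fun a => hdiag a.1) ?_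
    intro a b hab hpair
    refine hoff a.1 b.1 (fun h => hab (Subtype.ext h)) ?_
    intro h
    obtain ⟨ha, hb⟩ := (Prod.mk.injEq ..).mp h
    exact hpair (by rw [Prod.mk.injEq]; exact ⟨Subtype.ext ha, Subtype.ext hb⟩)
  · rw [listDet_of_diag (Matrix.of fun a b : {α : ι // v α = γ} => X a.1 b.1) ?_]
    · refine List.prod_eq_one fun x hx => ?_
      rw [List.mem_map] at hx
      obtain ⟨a, _, rfl⟩ := hx
      exact hdiag a.1
    · intro a b hab
      refine hoff a.1 b.1 (fun h => hab (Subtype.ext h)) ?_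
      intro h
      exact hγ (by rw [← a.2, ((Prod.mk.injEq ..).mp h).1])

end DetProdLemmas

section RowsML
variable {n N : ℕ} {A : Type*} [Ring A] [Algebra ℝ A]
  (𝒜 : Gamma n → Submodule ℝ A) [GradedAlgebra 𝒜]
  (w : Fin N → Gamma n) (D : Matrix (Fin N) (Fin N) A → A)

/-- Entrywise projection of a matrix onto the graded components prescribed by `w`. -/
def projMat (r : Fin N → Fin N → A) : Matrix (Fin N) (Fin N) A :=
  Matrix.of fun α β => (DirectSum.decompose 𝒜 (r α β) (w α + w β) : A)

theorem projMat_mdeg0 (r : Fin N → Fin N → A) : Mdeg0 𝒜 w (projMat 𝒜 w r) :=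
  fun _ _ => SetLike.coe_mem _

theorem projMat_eq (Y : Matrix (Fin N) (Fin N) A) (hY : Mdeg0 𝒜 w Y) :
    projMat 𝒜 w (fun α β => Y α β) = Y := by
  ext α β
  exact DirectSum.decompose_of_mem_same 𝒜 (hY α β)

/-- The multilinear (in the rows) extension of `D` to all matrices, obtained by first
projecting entries onto the prescribed graded components. -/
def rowsML (hDlin : RowLinear (Mdeg0 𝒜 w) D) :
    MultilinearMap ℝ (fun _ : Fin N => (Fin N → A)) A where
  toFun r := D (projMat 𝒜 w r)
  map_update_add' := by
    intro inst m i x y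
    refine hDlin.1 _ _ _ i (projMat_mdeg0 𝒜 w _) (projMat_mdeg0 𝒜 w _)
      (projMat_mdeg0 𝒜 w _) ?_ ?_
    · intro α β hα
      constructor <;>
        simp only [projMat, Matrix.of_apply, Function.update_of_ne hα]
    · intro β
      simp only [projMat, Matrix.of_apply, Function.update_self, Pi.add_apply,
        DirectSum.decompose_add, DirectSum.add_apply, Submodule.coe_add]
  map_update_smul' := by
    intro inst m i c x
    refine hDlin.2 c _ _ i (projMat_mdeg0 𝒜 w _) (projMat_mdeg0 𝒜 w _) ?_ ?_
    · intro α β hα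
      simp only [projMat, Matrix.of_apply, Function.update_of_ne hα]
    · intro β
      simp only [projMat, Matrix.of_apply, Function.update_self, Pi.smul_apply,
        DirectSum.decompose_smul, DirectSum.smul_apply, Submodule.coe_smul]

theorem rowsML_apply (hDlin : RowLinear (Mdeg0 𝒜 w) D) (r : Fin N → Fin N → A) :
    rowsML 𝒜 w D hDlin r = D (projMat 𝒜 w r) := rfl

end RowsML

end Aux

/-- **Differential equation for the graded determinant** (Lemma).
If `dX/dt = M X` with `X(t), M(t) ∈ M⁰(w)` (all weights even) and `D` is a graded
determinant which is ℝ-linear in each row, then `d/dt D(X) = tr(M) * D(X)`, where for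
purely even degree-zero matrices the graded trace is the ordinary trace `∑ α, M α α`. -/
theorem graded_det_ode {n N : ℕ} (hn : 1 ≤ n) (hN : 1 ≤ N)
    {A : Type*} [NormedRing A] [NormedAlgebra ℝ A] [FiniteDimensional ℝ A]
    (𝒜 : Gamma n → Submodule ℝ A) [GradedAlgebra 𝒜] (hcomm : GradedComm 𝒜)
    (w : Fin N → Gamma n) (hw : ∀ α, GammaEven (w α))
    (lo : LinearOrder (Gamma n))
    (D : Matrix (Fin N) (Fin N) A → A) (hD : DetAxioms 𝒜 lo w D)
    (hDlin : RowLinear (Mdeg0 𝒜 w) D)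
    (X M : ℝ → Matrix (Fin N) (Fin N) A)
    (hX : ∀ t, Mdeg0 𝒜 w (X t)) (hM : ∀ t, Mdeg0 𝒜 w (M t))
    (hder : ∀ (t : ℝ) (α β : Fin N),
      HasDerivAt (fun s => X s α β) ((M t * X t) α β) t) :
    ∀ t : ℝ, HasDerivAt (fun s => D (X s)) ((∑ α, M t α α) * D (X t)) t := by
  intro t
  classical
  -- basic facts about the grading group
  have hΓ : ∀ γ : Gamma n, γ + γ = 0 := fun γ => funext fun i => by
    have h2 : ∀ a : ZMod 2, a + a = 0 := by decide
    exact h2 (γ i)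
  have hidx : ∀ a b c : Gamma n, a + c + (c + b) = a + b := by
    intro a b c
    rw [show a + c + (c + b) = a + b + (c + c) by abel, hΓ, add_zero]
  have hone : ∀ α : Fin N, (1 : A) ∈ 𝒜 (w α + w α) := fun α => by
    rw [hΓ]; exact SetLike.one_mem_graded 𝒜
  have hmulmem : ∀ Y Z : Matrix (Fin N) (Fin N) A, Mdeg0 𝒜 w Y → Mdeg0 𝒜 w Z →
      Mdeg0 𝒜 w (Y * Z) := by
    intro Y Z hY hZ α β
    rw [Matrix.mul_apply]
    refine Submodule.sum_mem _ fun γ _ => ?_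
    have h := SetLike.mul_mem_graded (hY α γ) (hZ γ β)
    rwa [hidx] at h
  set Dm := rowsML 𝒜 w D hDlin with hDmdef
  have hDmX : ∀ Y : Matrix (Fin N) (Fin N) A, Mdeg0 𝒜 w Y → Dm (fun α => Y α) = D Y := by
    intro Y hY
    rw [hDmdef, rowsML_apply, projMat_eq 𝒜 w Y hY]
  -- the derivative via multilinearity
  have hd := Dm.hasDerivAt_comp (fun s α => X s α) (fun α => (M t * X t) α) t
    (fun i => hasDerivAt_pi.2 fun β => hder t i β)
  have hfe : (fun s => Dm (fun α => X s α)) = fun s => D (X s) :=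
    funext fun s => hDmX (X s) (hX s)
  rw [hfe] at hd
  -- rewriting a row update as a matrix
  have hupd : ∀ (i : Fin N) (v : Fin N → A), (∀ β, v β ∈ 𝒜 (w i + w β)) →
      Dm (Function.update (fun α => X t α) i v)
        = D (Matrix.of fun α β => if α = i then v β else X t α β) := by
    intro i v hv
    rw [hDmdef, rowsML_apply]
    congr 1
    ext α β
    simp only [projMat, Matrix.of_apply]
    rcases eq_or_ne α i with rfl | hα
    · rw [Function.update_self, if_pos rfl]
      exact DirectSum.decompose_of_mem_same 𝒜 (hv β)
    · rw [Function.update_of_ne hα, if_neg hα]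
      exact DirectSum.decompose_of_mem_same 𝒜 (hX t α β)
  -- Claim A : replacing row i by (M t i i) times itself multiplies D by M t i i
  have claimA : ∀ i : Fin N,
      D (Matrix.of fun α β => if α = i then M t i i * X t i β else X t α β)
        = M t i i * D (X t) := by
    intro i
    set c := M t i i with hc
    set E : Matrix (Fin N) (Fin N) A :=
      Matrix.of fun α β => if α = β then (if α = i then c else 1) else 0 with hE
    have hEm : Mdeg0 𝒜 w E := by
      intro α β
      simp only [hE, Matrix.of_apply]
      split_ifs with h1 h2
      · subst h1; subst h2; exact hM t _ _
      · subst h1; exact hone α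
      · exact Submodule.zero_mem _
    have hEX : E * X t = Matrix.of fun α β => if α = i then c * X t i β else X t α β := by
      ext α β
      rw [Matrix.mul_apply, Finset.sum_eq_single α]
      · simp only [hE, Matrix.of_apply, if_pos rfl]
        rcases eq_or_ne α i with rfl | hα
        · simp
        · simp [hα]
      · intro γ _ hγ
        simp only [hE, Matrix.of_apply,
          if_neg (show ¬ α = γ from fun h => hγ h.symm), zero_mul]
      · intro h; exact absurd (Finset.mem_univ α) h
    have h2 := hD.2.1 E (X t) hEm (hX t)
    rw [hEX] at h2
    have h3 : D E = c := by
      rw [hD.2.2.1 E hEm (fun α β hw => by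
        simp only [hE, Matrix.of_apply, if_neg (show ¬ α = β from fun h => hw (h ▸ rfl))])]
      rw [detProd_of_diag lo w E ?_ i ?_]
      · simp [hE]
      · intro a b hab; simp [hE, hab]
      · intro a ha; simp [hE, ha]
    rw [h2, h3]
  -- Claim B : replacing row i by (M t i b) times row b (b ≠ i) kills D
  have claimB : ∀ i b : Fin N, b ≠ i →
      D (Matrix.of fun α β => if α = i then M t i b * X t b β else X t α β) = 0 := by
    intro i b hbi
    set c := M t i b with hc
    set T : Matrix (Fin N) (Fin N) A := Matrix.of fun α β =>
      (if α = β then (1 : A) else 0) + (if α = i ∧ β = b then c else 0) with hT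
    have hTm : Mdeg0 𝒜 w T := by
      intro α β
      simp only [hT, Matrix.of_apply]
      refine Submodule.add_mem _ ?_ ?_
      · split_ifs with h1
        · subst h1; exact hone α
        · exact Submodule.zero_mem _
      · split_ifs with h1
        · obtain ⟨rfl, rfl⟩ := h1; exact hM t _ _
        · exact Submodule.zero_mem _
    have hTX : ∀ α β', (T * X t) α β' = X t α β' + (if α = i then c * X t b β' else 0) := by
      intro α β'
      rw [Matrix.mul_apply]
      have hsplit : ∀ γ : Fin N, T α γ * X t γ β' =
          (if α = γ then X t γ β' else 0) + (if α = i ∧ γ = b then c * X t γ β' else 0) := by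
        intro γ
        simp only [hT, Matrix.of_apply, add_mul, ite_mul, one_mul, zero_mul]
      rw [Finset.sum_congr rfl fun γ _ => hsplit γ, Finset.sum_add_distrib]
      congr 1
      · rw [Finset.sum_ite_eq]; simp
      · rcases eq_or_ne α i with rfl | hα
        · simp [Finset.sum_ite_eq']
        · simp [hα]
    have hrr : Mdeg0 𝒜 w (Matrix.of fun α β => if α = i then c * X t b β else X t α β) := by
      intro α β
      simp only [Matrix.of_apply]
      split_ifs with h1
      · subst h1
        have h := SetLike.mul_mem_graded (hM t α b) (hX t b β)
        rwa [hidx] at h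
      · exact hX t α β
    have hadd : D (T * X t) = D (X t)
        + D (Matrix.of fun α β => if α = i then c * X t b β else X t α β) := by
      refine hDlin.1 _ _ _ i (hmulmem _ _ hTm (hX t)) (hX t) hrr ?_ ?_
      · intro α β hα
        constructor
        · rw [hTX]; simp [hα]
        · rw [hTX]; simp [Matrix.of_apply, hα]
      · intro β
        rw [hTX]; simp [Matrix.of_apply]
    have hmul := hD.2.1 T (X t) hTm (hX t)
    have hasym : ∀ x y : Gamma n, lo.lt x y → lo.le y x → False :=
      fun x y hxy hyx => ((lo.lt_iff_le_not_ge x y).mp hxy).2 hyx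
    have hDT : D T = 1 := by
      by_cases hwib : w i = w b
      · rw [hD.2.2.1 T hTm ?_]
        · refine detProd_unitriangular lo w T i b (Ne.symm hbi) hwib ?_ ?_
          · intro a
            have h2 : ¬(a = i ∧ a = b) := by rintro ⟨rfl, rfl⟩; exact hbi rfl
            simp [hT, h2]
          · intro a b' hab hpair
            have h2 : ¬(a = i ∧ b' = b) := by rintro ⟨rfl, rfl⟩; exact hpair rfl
            simp [hT, hab, h2]
        · intro α β hw'
          have h1 : ¬ α = β := fun h => hw' (h ▸ rfl)
          have h2 : ¬(α = i ∧ β = b) := by rintro ⟨rfl, rfl⟩; exact hw' hwib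
          simp [hT, h1, h2]
      · refine hD.2.2.2 T hTm ?_ ?_
        · intro α β hwab
          rcases eq_or_ne α β with rfl | hab
          · have h2 : ¬(α = i ∧ α = b) := by rintro ⟨rfl, rfl⟩; exact hbi rfl
            simp [hT, h2]
          · have h2 : ¬(α = i ∧ β = b) := by rintro ⟨rfl, rfl⟩; exact hwib hwab
            simp [hT, hab, h2]
        · rcases lo.le_total (w i) (w b) with h | h
          · right
            intro α β hlt
            have h1 : ¬ α = β := by rintro rfl; exact hasym _ _ hlt (lo.le_refl _)
            have h2 : ¬(α = i ∧ β = b) := by rintro ⟨rfl, rfl⟩; exact hasym _ _ hlt h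
            simp [hT, h1, h2]
          · left
            intro α β hlt
            have h1 : ¬ α = β := by rintro rfl; exact hasym _ _ hlt (lo.le_refl _)
            have h2 : ¬(α = i ∧ β = b) := by rintro ⟨rfl, rfl⟩; exact hasym _ _ hlt h
            simp [hT, h1, h2]
    have hfin : D (X t) = D (X t)
        + D (Matrix.of fun α β => if α = i then c * X t b β else X t α β) := by
      rw [← hadd, hmul, hDT, one_mul]
    exact (left_eq_add.mp hfin)
  -- the value of each directional term
  have hterm : ∀ i : Fin N,
      Dm (Function.update (fun α => X t α) i ((M t * X t) i)) = M t i i * D (X t) := by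
    intro i
    have hrowsum : (M t * X t) i = ∑ b : Fin N, (fun β => M t i b * X t b β) := by
      funext β
      rw [Finset.sum_apply]
      exact Matrix.mul_apply
    rw [hrowsum]
    have hsum : Dm (Function.update (fun α => X t α) i
          (∑ b : Fin N, fun β => M t i b * X t b β))
        = ∑ b : Fin N, Dm (Function.update (fun α => X t α) i
            (fun β => M t i b * X t b β)) := by
      have e1 : ∀ v : Fin N → A, Dm (Function.update (fun α => X t α) i v)
          = Dm.toLinearMap (fun α => X t α) i v := fun v => rfl
      rw [e1, map_sum]
      exact Finset.sum_congr rfl fun b _ => (e1 _).symm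
    rw [hsum, Finset.sum_eq_single i]
    · rw [hupd i _ (fun β => by
        have h := SetLike.mul_mem_graded (hM t i i) (hX t i β)
        rwa [hidx] at h)]
      exact claimA i
    · intro b _ hb
      rw [hupd i _ (fun β => by
        have h := SetLike.mul_mem_graded (hM t i b) (hX t b β)
        rwa [hidx] at h)]
      exact claimB i b hb
    · intro h; exact absurd (Finset.mem_univ i) h
  have hsum : (∑ i, Dm (Function.update (fun α => X t α) i ((M t * X t) i)))
      = (∑ α, M t α α) * D (X t) := by
    rw [Finset.sum_congr rfl fun i _ => hterm i, Finset.sum_mul]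
  rw [← hsum]
  exact hd
end

section
/- Criterion for existence of a block UDL decomposition (Proposition): Let R be an associative unital ring (not necessarily commutative), p, N ≥ 1, b : Fin N → Fin p a block-assignment map, and X : Matrix (Fin N) (Fin N) R an invertible matrix. Then X admits a block UDL decomposition X = U * D * L, with U block-upper-unitriangular, D block-diagonal and L block-lower-unitriangular with respect to b, if and only if for every k : Fin p the square submatrix of X on the index set {α | k ≤ b α} is an invertible matrix over R (for k = 0 this is the hypothesis that X itself is invertible; the remaining conditions say that all trailing principal block submatrices X^{1…k,1…k} are invertible). -/
set_option linter.unusedSectionVars false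
set_option linter.unusedVariables false
set_option maxHeartbeats 1000000


open Matrix

/-- `U` is block-upper-unitriangular with respect to the block assignment `b`. -/
def BlockUpperUni {R : Type*} [Zero R] [One R] {p N : ℕ} (b : Fin N → Fin p)
    (U : Matrix (Fin N) (Fin N) R) : Prop :=
  (∀ α β, b β < b α → U α β = 0) ∧
  (∀ α β, b α = b β → U α β = if α = β then 1 else 0)

/-- `L` is block-lower-unitriangular with respect to the block assignment `b`. -/
def BlockLowerUni {R : Type*} [Zero R] [One R] {p N : ℕ} (b : Fin N → Fin p)
    (L : Matrix (Fin N) (Fin N) R) : Prop :=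
  (∀ α β, b α < b β → L α β = 0) ∧
  (∀ α β, b α = b β → L α β = if α = β then 1 else 0)

/-- `D` is block-diagonal with respect to the block assignment `b`. -/
def BlockDiag {R : Type*} [Zero R] {p N : ℕ} (b : Fin N → Fin p)
    (D : Matrix (Fin N) (Fin N) R) : Prop :=
  ∀ α β, b α ≠ b β → D α β = 0

section Helpers

variable {R : Type*} [Ring R] {ι : Type*} [Fintype ι] [DecidableEq ι]

private lemma isUnit_of_mul_both {M N : Matrix ι ι R} (h1 : M * N = 1) (h2 : N * M = 1) :
    IsUnit M := ⟨⟨M, N, h1, h2⟩, rfl⟩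

private lemma exists_inv {M : Matrix ι ι R} (h : IsUnit M) : ∃ N, M * N = 1 ∧ N * M = 1 := by
  obtain ⟨u, rfl⟩ := h
  refine ⟨(u⁻¹).val, ?_, ?_⟩
  · exact u.mul_inv
  · exact u.inv_mul

private lemma isUnit_submatrix_equiv {κ : Type*} [Fintype κ] [DecidableEq κ]
    (e : κ ≃ ι) {M : Matrix ι ι R} (h : IsUnit M) : IsUnit (M.submatrix e e) := by
  obtain ⟨N, h1, h2⟩ := exists_inv h
  refine isUnit_of_mul_both (M := M.submatrix e e) (N := N.submatrix e e) ?_ ?_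
  · rw [Matrix.submatrix_mul_equiv, h1, Matrix.submatrix_one_equiv]
  · rw [Matrix.submatrix_mul_equiv, h2, Matrix.submatrix_one_equiv]


private lemma pow_entry_zero (m : ι → ℕ) (W : Matrix ι ι R)
    (hW : ∀ α β, W α β ≠ 0 → m α < m β) :
    ∀ j α β, (W ^ j) α β ≠ 0 → m α + j ≤ m β := by
  intro j
  induction j with
  | zero =>
    intro α β h
    simp only [pow_zero, Matrix.one_apply, ne_eq, ite_eq_right_iff, not_forall] at h
    obtain ⟨h1, _⟩ := h
    subst h1; omega
  | succ n ih =>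
    intro α β h
    rw [pow_succ, Matrix.mul_apply] at h
    obtain ⟨γ, hγ⟩ : ∃ γ, (W ^ n) α γ * W γ β ≠ 0 := by
      by_contra hc
      push_neg at hc
      exact h (Finset.sum_eq_zero fun γ _ => hc γ)
    have h1 : (W ^ n) α γ ≠ 0 := fun hz => hγ (by rw [hz, zero_mul])
    have h2 : W γ β ≠ 0 := fun hz => hγ (by rw [hz, mul_zero])
    have := ih α γ h1
    have := hW γ β h2
    omega

private lemma isUnit_one_add_strict (p : ℕ) (m : ι → ℕ) (W : Matrix ι ι R)
    (hm : ∀ α, m α < p) (hW : ∀ α β, W α β ≠ 0 → m α < m β) :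
    IsUnit (1 + W) := by
  refine IsNilpotent.isUnit_one_add ⟨p, ?_⟩
  ext α β
  by_contra h
  have := pow_entry_zero m W hW p α β h
  have := hm β
  omega

private lemma submatrix_mul_of_support (P : ι → Prop) [DecidablePred P]
    (A B : Matrix ι ι R) (hA : ∀ α γ, P α → ¬ P γ → A α γ = 0) :
    (A * B).submatrix (fun a : {x // P x} => a.1) (fun a : {x // P x} => a.1)
      = A.submatrix (fun a : {x // P x} => a.1) (fun a : {x // P x} => a.1)
        * B.submatrix (fun a : {x // P x} => a.1) (fun a : {x // P x} => a.1) := by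
  ext a c
  simp only [Matrix.submatrix_apply, Matrix.mul_apply]
  rw [← Finset.sum_filter_add_sum_filter_not Finset.univ (fun γ => P γ)]
  have h2 : ∑ γ ∈ Finset.univ.filter (fun γ => ¬ P γ), A a.1 γ * B γ c.1 = 0 := by
    refine Finset.sum_eq_zero fun γ hγ => ?_
    rw [hA a.1 γ a.2 (Finset.mem_filter.mp hγ).2, zero_mul]
  rw [h2, add_zero]
  exact Finset.sum_subtype (p := P) (Finset.univ.filter P) (fun x => by simp) (fun γ => A a.1 γ * B γ c.1)


private lemma submatrix_mul_of_support' (P : ι → Prop) [DecidablePred P]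
    (A B : Matrix ι ι R) (hB : ∀ γ β, ¬ P γ → P β → B γ β = 0) :
    (A * B).submatrix (fun a : {x // P x} => a.1) (fun a : {x // P x} => a.1)
      = A.submatrix (fun a : {x // P x} => a.1) (fun a : {x // P x} => a.1)
        * B.submatrix (fun a : {x // P x} => a.1) (fun a : {x // P x} => a.1) := by
  ext a c
  simp only [Matrix.submatrix_apply, Matrix.mul_apply]
  rw [← Finset.sum_filter_add_sum_filter_not Finset.univ (fun γ => P γ)]
  have h2 : ∑ γ ∈ Finset.univ.filter (fun γ => ¬ P γ), A a.1 γ * B γ c.1 = 0 := by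
    refine Finset.sum_eq_zero fun γ hγ => ?_
    rw [hB γ c.1 (Finset.mem_filter.mp hγ).2 c.2, mul_zero]
  rw [h2, add_zero]
  exact Finset.sum_subtype (p := P) (Finset.univ.filter P) (fun x => by simp)
    (fun γ => A a.1 γ * B γ c.1)

private lemma one_submatrix (P : ι → Prop) [DecidablePred P] :
    (1 : Matrix ι ι R).submatrix (fun a : {x // P x} => a.1) (fun a : {x // P x} => a.1)
      = 1 := by
  ext a c
  simp [Matrix.one_apply, Subtype.ext_iff]

private lemma isUnit_submatrix_of_support (P : ι → Prop) [DecidablePred P]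
    (D : Matrix ι ι R) (h1 : ∀ α γ, P α → ¬ P γ → D α γ = 0)
    (h2 : ∀ α γ, ¬ P α → P γ → D α γ = 0) (h : IsUnit D) :
    IsUnit (D.submatrix (fun a : {x // P x} => a.1) (fun a : {x // P x} => a.1)) := by
  obtain ⟨E, hDE, hED⟩ := exists_inv h
  refine isUnit_of_mul_both
    (N := E.submatrix (fun a : {x // P x} => a.1) (fun a : {x // P x} => a.1)) ?_ ?_
  · rw [← submatrix_mul_of_support P D E h1, hDE, one_submatrix]
  · rw [← submatrix_mul_of_support' P E D h2, hED, one_submatrix]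


private lemma isUnit_of_entry_equiv {κ κ' : Type*} [Fintype κ] [DecidableEq κ]
    [Fintype κ'] [DecidableEq κ'] (e : κ ≃ κ') (M : Matrix κ κ R) (M' : Matrix κ' κ' R)
    (hM : ∀ i j, M i j = M' (e i) (e j)) (h : IsUnit M) : IsUnit M' := by
  have hMM : M' = M.submatrix e.symm e.symm := by
    ext i j
    rw [Matrix.submatrix_apply, hM, Equiv.apply_symm_apply, Equiv.apply_symm_apply]
  rw [hMM]
  exact isUnit_submatrix_equiv e.symm h

private def GUp (b : ι → ℕ) (U : Matrix ι ι R) : Prop :=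
  (∀ α β, b β < b α → U α β = 0) ∧ (∀ α β, b α = b β → U α β = if α = β then 1 else 0)

private def GLo (b : ι → ℕ) (L : Matrix ι ι R) : Prop :=
  (∀ α β, b α < b β → L α β = 0) ∧ (∀ α β, b α = b β → L α β = if α = β then 1 else 0)

private def GDi (b : ι → ℕ) (D : Matrix ι ι R) : Prop := ∀ α β, b α ≠ b β → D α β = 0

private lemma udl_exists (p : ℕ) :
    ∀ {κ : Type} [Fintype κ] [DecidableEq κ] (b : κ → ℕ), (∀ α, b α < p) →
    ∀ (X : Matrix κ κ R),
    (∀ k : ℕ, IsUnit (X.submatrix (fun a : {α // k ≤ b α} => a.1)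
      (fun a : {α // k ≤ b α} => a.1))) →
    ∃ U D L : Matrix κ κ R, GUp b U ∧ GDi b D ∧ GLo b L ∧ X = U * D * L := by
  induction p with
  | zero =>
    intro κ _ _ b hb X hX
    haveI : IsEmpty κ := ⟨fun α => Nat.not_lt_zero _ (hb α)⟩
    refine ⟨1, 1, 1, ⟨fun α => isEmptyElim α, fun α => isEmptyElim α⟩,
      fun α => isEmptyElim α, ⟨fun α => isEmptyElim α, fun α => isEmptyElim α⟩, ?_⟩
    ext i j
    exact isEmptyElim i
  | succ p ih =>
    intro κ _ _ b hb X hX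
    classical
    set q : κ → Prop := fun α => b α = 0 with hq
    set σ : {α // q α} ⊕ {α // ¬ q α} ≃ κ := Equiv.sumCompl q with hσ
    set Y : Matrix ({α // q α} ⊕ {α // ¬ q α}) ({α // q α} ⊕ {α // ¬ q α}) R :=
      X.submatrix σ σ with hYdef
    set A := Y.toBlocks₁₁ with hA
    set B := Y.toBlocks₁₂ with hB
    set C := Y.toBlocks₂₁ with hC
    set E := Y.toBlocks₂₂ with hEq
    -- X is a unit
    have hXunit : IsUnit X := by
      exact isUnit_of_entry_equiv (Equiv.subtypeUnivEquiv (fun α => Nat.zero_le (b α)))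
        (X.submatrix (fun a : {α // 0 ≤ b α} => a.1) (fun a : {α // 0 ≤ b α} => a.1)) X
        (fun i j => rfl) (hX 0)
    have hYunit : IsUnit Y := isUnit_submatrix_equiv σ hXunit
    -- E is a unit
    have hEunit : IsUnit E := by
      exact isUnit_of_entry_equiv
        (Equiv.subtypeEquivRight (q := fun α => ¬ q α)
          (fun α => by simp [hq, Nat.one_le_iff_ne_zero]))
        (X.submatrix (fun a : {α // 1 ≤ b α} => a.1) (fun a : {α // 1 ≤ b α} => a.1)) E
        (fun i j => rfl) (hX 1)
    obtain ⟨Einv, hEi1, hEi2⟩ := exists_inv hEunit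
    set A' : Matrix {α // q α} {α // q α} R := A - B * (Einv * C) with hA'
    -- the UDL decomposition of E via the inductive hypothesis
    set b₁ : {α // ¬ q α} → ℕ := fun a => b a.1 - 1 with hb₁
    have hb₁lt : ∀ a, b₁ a < p := by
      intro a
      have h1 : b a.1 ≠ 0 := a.2
      have h2 : b a.1 < p + 1 := hb a.1
      simp only [hb₁]
      omega
    have hEk : ∀ k : ℕ, IsUnit (E.submatrix (fun a : {a // k ≤ b₁ a} => a.1)
        (fun a : {a // k ≤ b₁ a} => a.1)) := by
      intro k
      let he : {α : κ // k + 1 ≤ b α} ≃ {a : {α // ¬ q α} // k ≤ b₁ a} :=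
        ⟨fun x => ⟨⟨x.1, fun h0 => by have := x.2; omega⟩, by have := x.2; simp [hb₁]; omega⟩,
         fun y => ⟨y.1.1, by have h1 : b y.1.1 ≠ 0 := y.1.2; have := y.2; simp [hb₁] at this; omega⟩,
         fun x => rfl, fun y => rfl⟩
      exact isUnit_of_entry_equiv he
        (X.submatrix (fun a : {α // k + 1 ≤ b α} => a.1) (fun a : {α // k + 1 ≤ b α} => a.1))
        (E.submatrix (fun a : {a // k ≤ b₁ a} => a.1) (fun a : {a // k ≤ b₁ a} => a.1))
        (fun i j => rfl) (hX (k + 1))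
    obtain ⟨U₂, D₂, L₂, hU₂, hD₂, hL₂, hEfac⟩ := ih b₁ hb₁lt E hEk
    obtain ⟨hU₂a, hU₂b⟩ := hU₂
    obtain ⟨hL₂a, hL₂b⟩ := hL₂
    have hYblocks : Y = Matrix.fromBlocks A B C E := (Matrix.fromBlocks_toBlocks Y).symm
    have hE1 : U₂ * (D₂ * L₂) = E := by rw [← mul_assoc, ← hEfac]
    have hK1 : U₂ * (D₂ * (L₂ * (Einv * C))) = C := by
      simp only [← Matrix.mul_assoc]
      rw [← hEfac, hEi1, Matrix.one_mul]
    have hfac : Matrix.fromBlocks 1 (B * (Einv * U₂)) 0 U₂ *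
        Matrix.fromBlocks A' 0 0 D₂ *
        Matrix.fromBlocks 1 0 (L₂ * (Einv * C)) L₂ = Y := by
      rw [hYblocks, Matrix.fromBlocks_multiply, Matrix.fromBlocks_multiply]
      rw [Matrix.fromBlocks_inj]
      refine ⟨?_, ?_, ?_, ?_⟩
      · simp only [Matrix.mul_zero, Matrix.mul_one, Matrix.one_mul, Matrix.zero_mul,
          add_zero, zero_add, Matrix.mul_assoc, hK1, hA']
        exact sub_add_cancel A (B * (Einv * C))
      · simp only [Matrix.mul_zero, Matrix.mul_one, Matrix.one_mul, Matrix.zero_mul,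
          add_zero, zero_add, Matrix.mul_assoc, hE1]
        rw [hEi2, Matrix.mul_one]
      · simp only [Matrix.mul_zero, Matrix.mul_one, Matrix.one_mul, Matrix.zero_mul,
          add_zero, zero_add, Matrix.mul_assoc, hK1]
      · simp only [Matrix.mul_zero, Matrix.mul_one, Matrix.one_mul, Matrix.zero_mul,
          add_zero, zero_add, Matrix.mul_assoc, hE1]
    refine ⟨(Matrix.fromBlocks 1 (B * (Einv * U₂)) 0 U₂).submatrix σ.symm σ.symm,
      (Matrix.fromBlocks A' 0 0 D₂).submatrix σ.symm σ.symm,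
      (Matrix.fromBlocks 1 0 (L₂ * (Einv * C)) L₂).submatrix σ.symm σ.symm,
      ⟨?_, ?_⟩, ?_, ⟨?_, ?_⟩, ?_⟩
    · -- upper: zero below
      intro α β hlt
      have hα : ¬ q α := by simp only [hq]; omega
      rw [Matrix.submatrix_apply, hσ, Equiv.sumCompl_symm_apply_of_neg (p := q) hα]
      by_cases hβ : q β
      · rw [Equiv.sumCompl_symm_apply_of_pos (p := q) hβ, Matrix.fromBlocks_apply₂₁,
          Matrix.zero_apply]
      · rw [Equiv.sumCompl_symm_apply_of_neg (p := q) hβ, Matrix.fromBlocks_apply₂₂]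
        refine hU₂a _ _ ?_
        simp only [hq] at hα hβ
        simp only [hb₁]
        omega
    · -- upper: unitriangular on diagonal blocks
      intro α β heq
      by_cases hα : q α
      · have hβ : q β := by simp only [hq] at hα ⊢; omega
        rw [Matrix.submatrix_apply, hσ, Equiv.sumCompl_symm_apply_of_pos (p := q) hα,
          Equiv.sumCompl_symm_apply_of_pos (p := q) hβ, Matrix.fromBlocks_apply₁₁,
          Matrix.one_apply]
        by_cases h : α = β
        · subst h; simp
        · rw [if_neg (fun hc => h (congrArg Subtype.val hc)), if_neg h]
      · have hβ : ¬ q β := by simp only [hq] at hα ⊢; omega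
        rw [Matrix.submatrix_apply, hσ, Equiv.sumCompl_symm_apply_of_neg (p := q) hα,
          Equiv.sumCompl_symm_apply_of_neg (p := q) hβ, Matrix.fromBlocks_apply₂₂]
        rw [hU₂b _ _ (by simp only [hq] at hα hβ; simp only [hb₁]; omega)]
        by_cases h : α = β
        · subst h; simp
        · rw [if_neg (fun hc => h (congrArg Subtype.val hc)), if_neg h]
    · -- block diagonal
      intro α β hne
      by_cases hα : q α <;> by_cases hβ : q β
      · exfalso; simp only [hq] at hα hβ; omega
      · rw [Matrix.submatrix_apply, hσ, Equiv.sumCompl_symm_apply_of_pos (p := q) hα,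
          Equiv.sumCompl_symm_apply_of_neg (p := q) hβ, Matrix.fromBlocks_apply₁₂,
          Matrix.zero_apply]
      · rw [Matrix.submatrix_apply, hσ, Equiv.sumCompl_symm_apply_of_neg (p := q) hα,
          Equiv.sumCompl_symm_apply_of_pos (p := q) hβ, Matrix.fromBlocks_apply₂₁,
          Matrix.zero_apply]
      · rw [Matrix.submatrix_apply, hσ, Equiv.sumCompl_symm_apply_of_neg (p := q) hα,
          Equiv.sumCompl_symm_apply_of_neg (p := q) hβ, Matrix.fromBlocks_apply₂₂]
        exact hD₂ _ _ (by simp only [hq] at hα hβ; simp only [hb₁]; omega)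
    · -- lower: zero above
      intro α β hlt
      have hβ : ¬ q β := by simp only [hq]; omega
      rw [Matrix.submatrix_apply, hσ, Equiv.sumCompl_symm_apply_of_neg (p := q) hβ]
      by_cases hα : q α
      · rw [Equiv.sumCompl_symm_apply_of_pos (p := q) hα, Matrix.fromBlocks_apply₁₂,
          Matrix.zero_apply]
      · rw [Equiv.sumCompl_symm_apply_of_neg (p := q) hα, Matrix.fromBlocks_apply₂₂]
        refine hL₂a _ _ ?_
        simp only [hq] at hα hβ
        simp only [hb₁]
        omega
    · -- lower: unitriangular on diagonal blocks
      intro α β heq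
      by_cases hα : q α
      · have hβ : q β := by simp only [hq] at hα ⊢; omega
        rw [Matrix.submatrix_apply, hσ, Equiv.sumCompl_symm_apply_of_pos (p := q) hα,
          Equiv.sumCompl_symm_apply_of_pos (p := q) hβ, Matrix.fromBlocks_apply₁₁,
          Matrix.one_apply]
        by_cases h : α = β
        · subst h; simp
        · rw [if_neg (fun hc => h (congrArg Subtype.val hc)), if_neg h]
      · have hβ : ¬ q β := by simp only [hq] at hα ⊢; omega
        rw [Matrix.submatrix_apply, hσ, Equiv.sumCompl_symm_apply_of_neg (p := q) hα,
          Equiv.sumCompl_symm_apply_of_neg (p := q) hβ, Matrix.fromBlocks_apply₂₂]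
        rw [hL₂b _ _ (by simp only [hq] at hα hβ; simp only [hb₁]; omega)]
        by_cases h : α = β
        · subst h; simp
        · rw [if_neg (fun hc => h (congrArg Subtype.val hc)), if_neg h]
    · -- the factorization
      rw [Matrix.submatrix_mul_equiv, Matrix.submatrix_mul_equiv, hfac, hYdef,
        Matrix.submatrix_submatrix, Equiv.self_comp_symm, Matrix.submatrix_id_id]

private lemma isUnit_of_unitri (p : ℕ) (m : ι → ℕ) (hm : ∀ α, m α < p)
    (U : Matrix ι ι R) (h0 : ∀ α β, m β < m α → U α β = 0)
    (h1 : ∀ α β, m α = m β → U α β = if α = β then 1 else 0) : IsUnit U := by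
  have hU : U = 1 + (U - 1) := by rw [add_sub_cancel]
  rw [hU]
  refine isUnit_one_add_strict p m _ hm ?_
  intro α β hW
  by_contra hc
  push_neg at hc
  apply hW
  rw [Matrix.sub_apply]
  rcases Nat.lt_or_ge (m β) (m α) with h | h
  · have hne : α ≠ β := fun hc2 => by subst hc2; omega
    rw [h0 α β h, Matrix.one_apply_ne hne, sub_zero]
  · have heq : m α = m β := by omega
    rw [h1 α β heq, ← Matrix.one_apply, sub_self]


end Helpers

/-- **Criterion for existence of a block UDL decomposition** (Proposition).
An invertible matrix `X` over a (not necessarily commutative) unital ring admits a block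
UDL decomposition with respect to the block assignment `b` if and only if, for every
block index `k`, the square submatrix of `X` on the trailing index set `{α | k ≤ b α}`
is invertible. -/
theorem block_UDL_criterion {R : Type*} [Ring R] {p N : ℕ} (hp : 1 ≤ p) (hN : 1 ≤ N)
    (b : Fin N → Fin p) (X : Matrix (Fin N) (Fin N) R) (hX : IsUnit X) :
    (∃ U D L : Matrix (Fin N) (Fin N) R,
        BlockUpperUni b U ∧ BlockDiag b D ∧ BlockLowerUni b L ∧ X = U * D * L) ↔
    (∀ k : Fin p, IsUnit
      (X.submatrix (fun a : {α : Fin N // k ≤ b α} => a.1)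
        (fun a : {α : Fin N // k ≤ b α} => a.1))) := by
  constructor
  · rintro ⟨U, D, L, hU, hD, hL, hfac⟩ k
    have hUunit : IsUnit U :=
      isUnit_of_unitri p (fun α => (b α).val) (fun α => (b α).isLt) U
        (fun α β h => hU.1 α β h) (fun α β h => hU.2 α β (Fin.val_injective h))
    have hLunit : IsUnit L :=
      isUnit_of_unitri p (fun α => p - 1 - (b α).val)
        (fun α => show p - 1 - (b α).val < p by have := (b α).isLt; omega) L
        (fun α β h => by
          have h' : p - 1 - (b β).val < p - 1 - (b α).val := h
          have := (b α).isLt; have := (b β).isLt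
          exact hL.1 α β (show (b α).val < (b β).val by omega))
        (fun α β h => by
          have h' : p - 1 - (b α).val = p - 1 - (b β).val := h
          have := (b α).isLt; have := (b β).isLt
          exact hL.2 α β (Fin.val_injective (by omega)))
    obtain ⟨Uinv, hU1, hU2⟩ := exists_inv hUunit
    obtain ⟨Linv, hL1, hL2⟩ := exists_inv hLunit
    have hDeq : D = Uinv * X * Linv := by
      rw [hfac]
      simp only [← Matrix.mul_assoc]
      rw [hU2, Matrix.one_mul, Matrix.mul_assoc, hL1, Matrix.mul_one]
    have hDunit : IsUnit D := by
      rw [hDeq]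
      exact ((isUnit_of_mul_both hU2 hU1).mul hX).mul (isUnit_of_mul_both hL2 hL1)
    have hUsup : ∀ α γ, k ≤ b α → ¬ k ≤ b γ → U α γ = 0 := fun α γ hα hγ =>
      hU.1 α γ (lt_of_lt_of_le (lt_of_not_ge hγ) hα)
    have hDsup : ∀ α γ, k ≤ b α → ¬ k ≤ b γ → D α γ = 0 := fun α γ hα hγ =>
      hD α γ (lt_of_lt_of_le (lt_of_not_ge hγ) hα).ne'
    have hDsup' : ∀ α γ, ¬ k ≤ b α → k ≤ b γ → D α γ = 0 := fun α γ hα hγ =>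
      hD α γ (lt_of_lt_of_le (lt_of_not_ge hα) hγ).ne
    have hXP : X.submatrix (fun a : {α : Fin N // k ≤ b α} => a.1)
        (fun a : {α : Fin N // k ≤ b α} => a.1)
        = U.submatrix (fun a : {α : Fin N // k ≤ b α} => a.1)
            (fun a : {α : Fin N // k ≤ b α} => a.1)
          * (D.submatrix (fun a : {α : Fin N // k ≤ b α} => a.1)
              (fun a : {α : Fin N // k ≤ b α} => a.1)
            * L.submatrix (fun a : {α : Fin N // k ≤ b α} => a.1)
              (fun a : {α : Fin N // k ≤ b α} => a.1)) := by
      rw [hfac, Matrix.mul_assoc,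
        submatrix_mul_of_support (fun α => k ≤ b α) U (D * L) hUsup,
        submatrix_mul_of_support (fun α => k ≤ b α) D L hDsup]
    rw [hXP]
    have hUP : IsUnit (U.submatrix (fun a : {α : Fin N // k ≤ b α} => a.1)
        (fun a : {α : Fin N // k ≤ b α} => a.1)) := by
      refine isUnit_of_unitri p (fun a => (b a.1).val) (fun a => (b a.1).isLt) _
        (fun α β h => hU.1 α.1 β.1 h) (fun α β h => ?_)
      rw [Matrix.submatrix_apply, hU.2 α.1 β.1 (Fin.val_injective h)]
      simp [Subtype.ext_iff]
    have hLP : IsUnit (L.submatrix (fun a : {α : Fin N // k ≤ b α} => a.1)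
        (fun a : {α : Fin N // k ≤ b α} => a.1)) := by
      refine isUnit_of_unitri p (fun a => p - 1 - (b a.1).val)
        (fun a => show p - 1 - (b a.1).val < p by have := (b a.1).isLt; omega) _
        (fun α β h => by
          have h' : p - 1 - (b β.1).val < p - 1 - (b α.1).val := h
          have := (b α.1).isLt; have := (b β.1).isLt
          exact hL.1 α.1 β.1 (show (b α.1).val < (b β.1).val by omega))
        (fun α β h => ?_)
      have h' : p - 1 - (b α.1).val = p - 1 - (b β.1).val := h
      have := (b α.1).isLt; have := (b β.1).isLt
      rw [Matrix.submatrix_apply, hL.2 α.1 β.1 (Fin.val_injective (by omega))]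
      simp [Subtype.ext_iff]
    have hDP : IsUnit (D.submatrix (fun a : {α : Fin N // k ≤ b α} => a.1)
        (fun a : {α : Fin N // k ≤ b α} => a.1)) :=
      isUnit_submatrix_of_support (fun α => k ≤ b α) D hDsup hDsup' hDunit
    exact hUP.mul (hDP.mul hLP)
  · intro h
    have hall : ∀ k : ℕ, IsUnit (X.submatrix
        (fun a : {α : Fin N // k ≤ (b α).val} => a.1)
        (fun a : {α : Fin N // k ≤ (b α).val} => a.1)) := by
      intro k
      by_cases hk : k < p
      · exact isUnit_of_entry_equiv
          (Equiv.subtypeEquivRight (p := fun α => (⟨k, hk⟩ : Fin p) ≤ b α)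
            (q := fun α => k ≤ (b α).val) (fun α => Iff.rfl))
          (X.submatrix (fun a : {α : Fin N // (⟨k, hk⟩ : Fin p) ≤ b α} => a.1)
            (fun a : {α : Fin N // (⟨k, hk⟩ : Fin p) ≤ b α} => a.1))
          (X.submatrix (fun a : {α : Fin N // k ≤ (b α).val} => a.1)
            (fun a : {α : Fin N // k ≤ (b α).val} => a.1))
          (fun i j => rfl) (h ⟨k, hk⟩)
      · haveI : IsEmpty {α : Fin N // k ≤ (b α).val} :=
          ⟨fun a => by have := (b a.1).isLt; have := a.2; omega⟩
        exact isUnit_of_mul_both (N := 1) (by ext i j; exact isEmptyElim i)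
          (by ext i j; exact isEmptyElim i)
    obtain ⟨U, D, L, hU, hD, hL, hfac⟩ :=
      udl_exists p (fun α => (b α).val) (fun α => (b α).isLt) X hall
    exact ⟨U, D, L,
      ⟨fun α β hlt => hU.1 α β hlt, fun α β he => hU.2 α β (congrArg Fin.val he)⟩,
      fun α β hne => hD α β (fun hc => hne (Fin.val_injective hc)),
      ⟨fun α β hlt => hL.1 α β hlt, fun α β he => hL.2 α β (congrArg Fin.val he)⟩,
      hfac⟩
end

section
/- Quasideterminants commute with deletion of a row and a column of the first block (Corollary): Let R be an associative unital ring, m, s ≥ 1, and let A : Matrix (Fin (m+1)) (Fin (m+1)) R, B : Matrix (Fin (m+1)) (Fin s) R, C : Matrix (Fin s) (Fin (m+1)) R, D : Matrix (Fin s) (Fin s) R with D invertible. Then for all i, j : Fin (m+1), deleting row i and column j from the Schur complement A − B * D⁻¹ * C yields the Schur complement of the block matrix with the same row and column deleted: (A − B * D⁻¹ * C).submatrix (Fin.succAbove i) (Fin.succAbove j) = A.submatrix (Fin.succAbove i) (Fin.succAbove j) − (B.submatrix (Fin.succAbove i) id) * D⁻¹ * (C.submatrix id (Fin.succAbove j)).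 Consequently, for any row index a ≠ i and column index b ≠ j of the first block, the (a,b) quasideterminant of the (1,1) block quasideterminant of X = fromBlocks A B C D with row i and column j deleted exists if and only if the (a,b) quasideterminant of X with row i and column j deleted exists, and then the two quasideterminants are equal. -/
open Matrix

/-- The matrix obtained from `M` by deleting row `a` and column `b`. -/
def delMat {R ι κ : Type*} (M : Matrix ι κ R) (a : ι) (b : κ) :
    Matrix {x : ι // x ≠ a} {y : κ // y ≠ b} R :=
  M.submatrix Subtype.val Subtype.val

/-- `QdetEq M a b q` : the quasideterminant `|M|_{ab}` exists (i.e. the submatrix `M^{a,b}`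
obtained by deleting row `a` and column `b` has a two-sided inverse `Ninv`) and equals `q`,
namely `q = M a b - r_a * (M^{a,b})^{-1} * c_b` where `r_a` is row `a` without entry `b` and
`c_b` is column `b` without entry `a`. -/
def QdetEq {R ι κ : Type*} [Ring R] [Fintype ι] [Fintype κ] [DecidableEq ι] [DecidableEq κ]
    (M : Matrix ι κ R) (a : ι) (b : κ) (q : R) : Prop :=
  ∃ Ninv : Matrix {y : κ // y ≠ b} {x : ι // x ≠ a} R,
    delMat M a b * Ninv = 1 ∧ Ninv * delMat M a b = 1 ∧
    q = M a b - ∑ c : {y : κ // y ≠ b}, ∑ r : {x : ι // x ≠ a},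
      M a c.1 * Ninv c r * M r.1 b

namespace QuasidetAux

variable {R : Type*} [Ring R]

/-- Equivalence between `{x // x ≠ i} ⊕ β` and `{x : α ⊕ β // x ≠ Sum.inl i}`. -/
def sumNeEquiv {α β : Type*} (i : α) : ({x : α // x ≠ i} ⊕ β) ≃ {x : α ⊕ β // x ≠ Sum.inl i} where
  toFun x := match x with
    | Sum.inl ⟨y, h⟩ => ⟨Sum.inl y, fun hy => h (Sum.inl.inj hy)⟩
    | Sum.inr z => ⟨Sum.inr z, fun hy => nomatch hy⟩
  invFun x := match x with
    | ⟨Sum.inl y, h⟩ => Sum.inl ⟨y, fun hy => h (congrArg Sum.inl hy)⟩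
    | ⟨Sum.inr z, _⟩ => Sum.inr z
  left_inv x := by rcases x with ⟨y, h⟩ | z <;> rfl
  right_inv x := by rcases x with ⟨y | z, h⟩ <;> rfl

lemma sum_sum_eq_dot {ι κ : Type*} [Fintype ι] [Fintype κ] (u : κ → R) (Z : Matrix κ ι R)
    (v : ι → R) : ∑ c : κ, ∑ r : ι, u c * Z c r * v r = u ⬝ᵥ Z *ᵥ v := by
  simp [dotProduct, Matrix.mulVec, Finset.mul_sum, mul_assoc]

lemma schur_submatrix {ι κ σ ι' κ' : Type*} [Fintype σ]
    (A : Matrix ι κ R) (B : Matrix ι σ R) (C : Matrix σ κ R) (M : Matrix σ σ R)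
    (g : ι' → ι) (h : κ' → κ) :
    (A - B * M * C).submatrix g h =
      A.submatrix g h - B.submatrix g id * M * C.submatrix id h := by
  have : (B * M * C).submatrix g h = B.submatrix g id * M * C.submatrix id h := by
    rw [Matrix.submatrix_mul (B * M) C g id h Function.bijective_id,
      Matrix.submatrix_mul B M g id id Function.bijective_id]
    rfl
  rw [Matrix.submatrix_sub, Pi.sub_apply, Pi.sub_apply, this]

lemma qdetEq_congr {ι κ ι₀ κ₀ : Type*} [Fintype ι] [Fintype κ] [DecidableEq ι] [DecidableEq κ]
    [Fintype ι₀] [Fintype κ₀] [DecidableEq ι₀] [DecidableEq κ₀]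
    (M : Matrix ι κ R) (a : ι) (b : κ) (q : R)
    (N : Matrix ι₀ κ₀ R) (e : ι₀ ≃ {x : ι // x ≠ a}) (f : κ₀ ≃ {y : κ // y ≠ b})
    (hN : N = (delMat M a b).submatrix e f) :
    QdetEq M a b q ↔
      ∃ Z : Matrix κ₀ ι₀ R, N * Z = 1 ∧ Z * N = 1 ∧
        q = M a b - (fun c => M a (f c).1) ⬝ᵥ Z *ᵥ (fun r => M (e r).1 b) := by
  subst hN
  constructor
  · rintro ⟨Ninv, h1, h2, hq⟩
    refine ⟨Ninv.submatrix ⇑f ⇑e, ?_, ?_, ?_⟩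
    · rw [Matrix.submatrix_mul_equiv (delMat M a b) Ninv ⇑e f ⇑e, h1,
        Matrix.submatrix_one_equiv]
    · rw [Matrix.submatrix_mul_equiv Ninv (delMat M a b) ⇑f e ⇑f, h2,
        Matrix.submatrix_one_equiv]
    · rw [hq]
      have hs : (fun c => M a (f c).1) ⬝ᵥ (Ninv.submatrix ⇑f ⇑e) *ᵥ (fun r => M (e r).1 b)
          = ∑ c : {y : κ // y ≠ b}, ∑ r : {x : ι // x ≠ a}, M a c.1 * Ninv c r * M r.1 b := by
        rw [← sum_sum_eq_dot]
        exact Fintype.sum_equiv f _ _ fun c => Fintype.sum_equiv e _ _ fun r => rfl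
      rw [hs]
  · rintro ⟨Z, h1, h2, hq⟩
    refine ⟨Z.submatrix ⇑f.symm ⇑e.symm, ?_, ?_, ?_⟩
    · have : delMat M a b = ((delMat M a b).submatrix ⇑e ⇑f).submatrix ⇑e.symm ⇑f.symm := by
        simp [Matrix.submatrix_submatrix, Equiv.self_comp_symm]
      rw [this, Matrix.submatrix_mul_equiv _ Z ⇑e.symm f.symm ⇑e.symm, h1,
        Matrix.submatrix_one_equiv]
    · have : delMat M a b = ((delMat M a b).submatrix ⇑e ⇑f).submatrix ⇑e.symm ⇑f.symm := by
        simp [Matrix.submatrix_submatrix, Equiv.self_comp_symm]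
      rw [this, Matrix.submatrix_mul_equiv Z _ ⇑f.symm e.symm ⇑f.symm, h2,
        Matrix.submatrix_one_equiv]
    · rw [hq]
      have hs : (fun c => M a (f c).1) ⬝ᵥ Z *ᵥ (fun r => M (e r).1 b)
          = ∑ c : {y : κ // y ≠ b}, ∑ r : {x : ι // x ≠ a},
              M a c.1 * (Z.submatrix ⇑f.symm ⇑e.symm) c r * M r.1 b := by
        rw [← sum_sum_eq_dot (fun c => M a (f c).1) Z (fun r => M (e r).1 b)]
        refine Fintype.sum_equiv f _ _ fun c => Fintype.sum_equiv e _ _ fun r => ?_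
        simp
      rw [hs]
lemma core {ι κ σ : Type*} [Fintype ι] [Fintype κ] [Fintype σ]
    [DecidableEq ι] [DecidableEq κ] [DecidableEq σ]
    (A : Matrix ι κ R) (B : Matrix ι σ R) (C : Matrix σ κ R) (D : Matrix σ σ R)
    (hD : IsUnit D) (a : ι) (b : κ) (q : R) :
    QdetEq (A - B * Ring.inverse D * C) a b q ↔
      QdetEq (Matrix.fromBlocks A B C D) (Sum.inl a) (Sum.inl b) q := by
  obtain ⟨iD⟩ := hD.nonempty_invertible
  rw [Ring.inverse_invertible]
  set A₂ : Matrix {x : ι // x ≠ a} {y : κ // y ≠ b} R := delMat A a b with hA₂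
  set B₂ : Matrix {x : ι // x ≠ a} σ R := B.submatrix Subtype.val id with hB₂
  set C₂ : Matrix σ {y : κ // y ≠ b} R := C.submatrix id Subtype.val with hC₂
  set E : Matrix {x : ι // x ≠ a} {y : κ // y ≠ b} R := A₂ - B₂ * ⅟D * C₂ with hE
  set Y : Matrix ({x : ι // x ≠ a} ⊕ σ) ({y : κ // y ≠ b} ⊕ σ) R :=
    Matrix.fromBlocks A₂ B₂ C₂ D with hY
  rw [qdetEq_congr (A - B * ⅟D * C) a b q E (Equiv.refl _) (Equiv.refl _) (by
      simp only [Equiv.coe_refl, Matrix.submatrix_id_id]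
      rw [hE, hA₂, hB₂, hC₂]
      exact (schur_submatrix A B C (⅟D) Subtype.val Subtype.val).symm),
    qdetEq_congr (Matrix.fromBlocks A B C D) (Sum.inl a) (Sum.inl b) q Y
      (sumNeEquiv a) (sumNeEquiv b) (by
      ext x y
      rcases x with ⟨u, hu'⟩ | t <;> rcases y with ⟨w, hw'⟩ | t' <;> rfl)]
  set u₁ : {y : κ // y ≠ b} → R := fun c => A a c.1 with hu₁
  set u₂ : σ → R := fun t => B a t with hu₂
  set v₁ : {x : ι // x ≠ a} → R := fun r => A r.1 b with hv₁
  set v₂ : σ → R := fun t => C t b with hv₂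
  have hu : (fun c => Matrix.fromBlocks A B C D (Sum.inl a) ((sumNeEquiv b) c).1)
      = Sum.elim u₁ u₂ := by
    funext c; rcases c with ⟨y, h⟩ | t <;> rfl
  have hv : (fun r => Matrix.fromBlocks A B C D ((sumNeEquiv a) r).1 (Sum.inl b))
      = Sum.elim v₁ v₂ := by
    funext r; rcases r with ⟨y, h⟩ | t <;> rfl
  have hfb : Matrix.fromBlocks A B C D (Sum.inl a) (Sum.inl b) = A a b := rfl
  have hSab : (A - B * ⅟D * C) a b = A a b - u₂ ⬝ᵥ (⅟D *ᵥ v₂) := by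
    simp only [Matrix.sub_apply, hu₂, hv₂]
    congr 1
    rw [Matrix.mul_assoc, Matrix.mul_apply]
    simp only [dotProduct, Matrix.mulVec, Matrix.mul_apply, dotProduct]
  have huS : (fun c : {y : κ // y ≠ b} => (A - B * ⅟D * C) a ((Equiv.refl _) c).1)
      = u₁ - u₂ ᵥ* (⅟D * C₂) := by
    funext c
    simp only [Equiv.refl_apply, Matrix.sub_apply, Pi.sub_apply, hu₁, hu₂]
    congr 1
    rw [Matrix.mul_assoc, Matrix.mul_apply]
    simp only [Matrix.vecMul, dotProduct, Matrix.mul_apply, hC₂,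
      Matrix.submatrix_apply, id_eq]
  have hvS : (fun r : {x : ι // x ≠ a} => (A - B * ⅟D * C) ((Equiv.refl _) r).1 b)
      = v₁ - (B₂ * ⅟D) *ᵥ v₂ := by
    funext r
    simp only [Equiv.refl_apply, Matrix.sub_apply, Pi.sub_apply, hv₁, hv₂]
    refine congrArg₂ (· - ·) rfl ?_
    rw [Matrix.mul_apply]
    simp only [Matrix.mulVec, dotProduct, Matrix.mul_apply, hB₂,
      Matrix.submatrix_apply, id_eq]
  have key : ∀ W : Matrix {y : κ // y ≠ b} {x : ι // x ≠ a} R,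
      Sum.elim u₁ u₂ ⬝ᵥ
        (Matrix.fromBlocks W (-(W * (B₂ * ⅟D))) (-(⅟D * (C₂ * W)))
          (⅟D + ⅟D * (C₂ * (W * (B₂ * ⅟D))))) *ᵥ Sum.elim v₁ v₂
      = u₂ ⬝ᵥ (⅟D *ᵥ v₂) + (u₁ - u₂ ᵥ* (⅟D * C₂)) ⬝ᵥ W *ᵥ (v₁ - (B₂ * ⅟D) *ᵥ v₂) := by
    intro W
    rw [Matrix.fromBlocks_mulVec, sumElim_dotProduct_sumElim]
    simp only [Sum.elim_comp_inl, Sum.elim_comp_inr]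
    simp only [Matrix.mulVec_add, Matrix.add_mulVec, Matrix.neg_mulVec,
      dotProduct_add, dotProduct_neg, dotProduct_sub,
      sub_dotProduct, Matrix.mulVec_sub, Matrix.sub_vecMul,
      Matrix.dotProduct_mulVec, Matrix.vecMul_vecMul, Matrix.mul_assoc]
    abel
  constructor
  · rintro ⟨W, hW1, hW2, hq⟩
    have h1 : A₂ * W - B₂ * (⅟D * (C₂ * W)) = 1 := by
      rw [hE] at hW1
      simpa only [Matrix.sub_mul, Matrix.mul_assoc] using hW1
    have h2 : W * A₂ - W * (B₂ * (⅟D * C₂)) = 1 := by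
      rw [hE] at hW2
      simpa only [Matrix.mul_sub, Matrix.mul_assoc] using hW2
    refine ⟨Matrix.fromBlocks W (-(W * (B₂ * ⅟D))) (-(⅟D * (C₂ * W)))
      (⅟D + ⅟D * (C₂ * (W * (B₂ * ⅟D)))), ?_, ?_, ?_⟩
    · rw [hY, Matrix.fromBlocks_multiply, ← Matrix.fromBlocks_one, Matrix.fromBlocks_inj]
      refine ⟨?_, ?_, ?_, ?_⟩
      · simp only [Matrix.mul_neg, Matrix.mul_assoc]
        rw [← sub_eq_add_neg]
        exact h1
      · simp only [Matrix.mul_neg, Matrix.mul_add, Matrix.mul_assoc]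
        have h1' := congrArg (fun X => X * (B₂ * ⅟D)) h1
        simp only [Matrix.sub_mul, Matrix.one_mul, Matrix.mul_assoc] at h1'
        rw [sub_eq_iff_eq_add] at h1'
        rw [h1']
        exact neg_add_cancel _
      · simp only [Matrix.mul_neg, Matrix.mul_assoc]
        rw [show D * (⅟D * (C₂ * W)) = C₂ * W by
          rw [← Matrix.mul_assoc, mul_invOf_self, Matrix.one_mul]]
        exact add_neg_cancel _
      · simp only [Matrix.mul_neg, Matrix.mul_add, Matrix.mul_assoc]
        rw [show D * (⅟D * (C₂ * (W * (B₂ * ⅟D)))) = C₂ * (W * (B₂ * ⅟D)) by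
          rw [← Matrix.mul_assoc, mul_invOf_self, Matrix.one_mul], mul_invOf_self]
        abel
    · rw [hY, Matrix.fromBlocks_multiply, ← Matrix.fromBlocks_one, Matrix.fromBlocks_inj]
      refine ⟨?_, ?_, ?_, ?_⟩
      · simp only [Matrix.neg_mul, Matrix.mul_assoc]
        rw [← sub_eq_add_neg]
        exact h2
      · simp only [Matrix.neg_mul, Matrix.mul_assoc, invOf_mul_self, Matrix.mul_one]
        exact add_neg_cancel _
      · simp only [Matrix.neg_mul, Matrix.add_mul, Matrix.mul_assoc]
        have h2' := congrArg (fun X => ⅟D * (C₂ * X)) h2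
        simp only [Matrix.mul_sub, Matrix.mul_one, Matrix.mul_assoc] at h2'
        rw [sub_eq_iff_eq_add] at h2'
        rw [h2']
        exact neg_add_cancel _
      · simp only [Matrix.neg_mul, Matrix.add_mul, Matrix.mul_assoc, invOf_mul_self,
          Matrix.mul_one]
        abel
    · rw [hq, hu, hv, key W, hfb, hSab, huS, hvS]
      abel
  · rintro ⟨Z, hZ1, hZ2, hq⟩
    set Z11 := Z.toBlocks₁₁ with hZ11d
    set Z12 := Z.toBlocks₁₂ with hZ12d
    set Z21 := Z.toBlocks₂₁ with hZ21d
    set Z22 := Z.toBlocks₂₂ with hZ22d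
    have hZblocks : Z = Matrix.fromBlocks Z11 Z12 Z21 Z22 := (Matrix.fromBlocks_toBlocks Z).symm
    rw [hZblocks, hY, Matrix.fromBlocks_multiply, ← Matrix.fromBlocks_one,
      Matrix.fromBlocks_inj] at hZ1 hZ2
    obtain ⟨e11, e12, e21, e22⟩ := hZ1
    obtain ⟨f11, f12, f21, f22⟩ := hZ2
    have hDZ21 : D * Z21 = -(C₂ * Z11) := by
      rw [← sub_eq_zero, sub_neg_eq_add, add_comm]; exact e21
    have hZ21 : Z21 = -(⅟D * (C₂ * Z11)) := by
      have h := congrArg (fun X => ⅟D * X) hDZ21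
      simpa only [← Matrix.mul_assoc, invOf_mul_self, Matrix.one_mul, Matrix.mul_neg] using h
    have hZ12D : Z12 * D = -(Z11 * B₂) := by
      rw [← sub_eq_zero, sub_neg_eq_add, add_comm]; exact f12
    have hZ12 : Z12 = -(Z11 * (B₂ * ⅟D)) := by
      have h := congrArg (fun X => X * ⅟D) hZ12D
      simpa only [Matrix.mul_assoc, mul_invOf_self, Matrix.mul_one, Matrix.neg_mul] using h
    have hZ22 : Z22 = ⅟D + ⅟D * (C₂ * (Z11 * (B₂ * ⅟D))) := by
      have h : Z22 * D = 1 + ⅟D * (C₂ * (Z11 * B₂)) := by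
        have h0 := f22
        rw [hZ21, Matrix.neg_mul, add_comm, ← sub_eq_add_neg, sub_eq_iff_eq_add] at h0
        simpa only [Matrix.mul_assoc] using h0
      have h' := congrArg (fun X => X * ⅟D) h
      simpa only [Matrix.mul_assoc, mul_invOf_self, Matrix.mul_one, Matrix.add_mul,
        Matrix.one_mul] using h'
    have hE1 : E * Z11 = 1 := by
      rw [hE, Matrix.sub_mul]
      simp only [Matrix.mul_assoc]
      rw [← e11, hZ21, Matrix.mul_neg, ← sub_eq_add_neg]
    have hE2 : Z11 * E = 1 := by
      rw [hE, Matrix.mul_sub]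
      simp only [Matrix.mul_assoc]
      rw [← f11, hZ12, Matrix.neg_mul, ← sub_eq_add_neg]
      simp only [Matrix.mul_assoc]
    refine ⟨Z11, hE1, hE2, ?_⟩
    rw [hq, hfb, hu, hv, hZblocks, hZ12, hZ21, hZ22, key Z11, hSab, huS, hvS]
    abel
lemma qdetEq_submatrix {ι κ ι' κ' : Type*} [Fintype ι] [Fintype κ] [DecidableEq ι]
    [DecidableEq κ] [Fintype ι'] [Fintype κ'] [DecidableEq ι'] [DecidableEq κ']
    (N : Matrix ι κ R) (e : ι' ≃ ι) (f : κ' ≃ κ) (a : ι') (b : κ') (q : R) :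
    QdetEq (N.submatrix ⇑e ⇑f) a b q ↔ QdetEq N (e a) (f b) q := by
  rw [qdetEq_congr (N.submatrix ⇑e ⇑f) a b q (delMat (N.submatrix ⇑e ⇑f) a b)
      (Equiv.refl _) (Equiv.refl _) (by simp),
    qdetEq_congr N (e a) (f b) q (delMat (N.submatrix ⇑e ⇑f) a b)
      (e.subtypeEquiv fun x => (not_congr (Equiv.apply_eq_iff_eq e)).symm)
      (f.subtypeEquiv fun y => (not_congr (Equiv.apply_eq_iff_eq f)).symm)
      rfl]
  exact Iff.rfl

end QuasidetAux

open QuasidetAux in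
/-- **Quasideterminants commute with deletion of a row and a column of the first block**
(Corollary). For a block matrix `X = fromBlocks A B C D` with `D` invertible, deleting row
`i` and column `j` (of the first block) from the Schur complement `A - B D⁻¹ C` yields the
Schur complement of `X` with the same row and column deleted; consequently, for `a ≠ i`,
`b ≠ j`, the `(a,b)` quasideterminant of `|X|₁₁` with row `i` and column `j` deleted exists
iff the `(a,b)` quasideterminant of `X` with row `i` and column `j` deleted does, and then
they are equal. -/
theorem quasidet_deletion {R : Type*} [Ring R] {m s : ℕ} (hs : 1 ≤ s)
    (A : Matrix (Fin (m + 1)) (Fin (m + 1)) R) (B : Matrix (Fin (m + 1)) (Fin s) R)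
    (C : Matrix (Fin s) (Fin (m + 1)) R) (D : Matrix (Fin s) (Fin s) R)
    (hD : IsUnit D) (i j : Fin (m + 1)) :
    (A - B * Ring.inverse D * C).submatrix i.succAbove j.succAbove =
      A.submatrix i.succAbove j.succAbove -
        B.submatrix i.succAbove id * Ring.inverse D * C.submatrix id j.succAbove ∧
    ∀ (a b : Fin (m + 1)) (ha : a ≠ i) (hb : b ≠ j) (q : R),
      QdetEq (delMat (A - B * Ring.inverse D * C) i j) ⟨a, ha⟩ ⟨b, hb⟩ q ↔
      QdetEq (delMat (Matrix.fromBlocks A B C D) (Sum.inl i) (Sum.inl j))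
        ⟨Sum.inl a, fun h => ha (Sum.inl.inj h)⟩
        ⟨Sum.inl b, fun h => hb (Sum.inl.inj h)⟩ q := by
  refine ⟨schur_submatrix A B C (Ring.inverse D) i.succAbove j.succAbove, ?_⟩
  intro a b ha hb q
  have hdel : delMat (A - B * Ring.inverse D * C) i j
      = delMat A i j - (B.submatrix Subtype.val id) * Ring.inverse D *
          (C.submatrix id Subtype.val) :=
    schur_submatrix A B C (Ring.inverse D) Subtype.val Subtype.val
  have hbig : delMat (Matrix.fromBlocks A B C D) (Sum.inl i) (Sum.inl j)
      = (Matrix.fromBlocks (delMat A i j) (B.submatrix Subtype.val id)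
          (C.submatrix id Subtype.val) D).submatrix
          ⇑(sumNeEquiv i).symm ⇑(sumNeEquiv j).symm := by
    ext x y
    rcases x with ⟨u | t, hx⟩ <;> rcases y with ⟨w | t', hy⟩ <;> rfl
  rw [hdel, hbig, qdetEq_submatrix _ (sumNeEquiv i).symm (sumNeEquiv j).symm]
  exact core (delMat A i j) (B.submatrix Subtype.val id) (C.submatrix id Subtype.val) D hD
    ⟨a, ha⟩ ⟨b, hb⟩ q
end
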